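/- Let D > 0, μ ∈ ℝ, and φ(s) := √(μ²s² + 4D) for s ∈ ℝ (or simply φ := √(c² + 4D) for a constant c = μ·l̇). Define U(x) = 1/2 − ((c + φ)/(2φ))·exp(((−c + φ)/(2D))x) for x ≤ 0 and U(x) = −1/2 + ((−c + φ)/(2φ))·exp(−((c + φ)/(2D))x) for x > 0, where φ = √(c²+4D). Then U is C¹ on ℝ and satisfies D·U'' + c·U' − U = −F(x) for x ≠ 0, where F(x) = 1/2 for x ≤ 0 and −1/2 for x > 0. -/

import Mathlib

/-- The step function F(x) = 1/2 for x ≤ 0, −1/2 for x > 0. -/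
noncomputable def Fstep : ℝ → ℝ := fun x => if x ≤ 0 then 1 / 2 else -1 / 2

/-- The renormalized traveling-front profile U with speed parameter c,
where φ = √(c²+4D). -/
noncomputable def Ufun (D c : ℝ) : ℝ → ℝ := fun x =>
  if x ≤ 0 then
    1 / 2 - (c + Real.sqrt (c ^ 2 + 4 * D)) / (2 * Real.sqrt (c ^ 2 + 4 * D))
      * Real.exp ((-c + Real.sqrt (c ^ 2 + 4 * D)) / (2 * D) * x)
  else
    -1 / 2 + (-c + Real.sqrt (c ^ 2 + 4 * D)) / (2 * Real.sqrt (c ^ 2 + 4 * D))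
      * Real.exp (-((c + Real.sqrt (c ^ 2 + 4 * D)) / (2 * D)) * x)

set_option maxHeartbeats 1000000 in
/-- U is C¹ on ℝ, bounded, and satisfies D·U'' + c·U' − U = −F(x) for x ≠ 0. -/
theorem stmt15 (D c : ℝ) (hD : 0 < D) :
    ContDiff ℝ 1 (Ufun D c) ∧
    (∀ x : ℝ, x ≠ 0 →
      D * deriv (deriv (Ufun D c)) x + c * deriv (Ufun D c) x - Ufun D c x = -Fstep x) ∧
    (∃ C : ℝ, ∀ x : ℝ, |Ufun D c x| ≤ C) := by
  have h4D : (0:ℝ) < c ^ 2 + 4 * D := by positivity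
  set p := Real.sqrt (c ^ 2 + 4 * D) with hp
  set a := (-c + p) / (2 * D) with ha
  set b := (c + p) / (2 * D) with hb
  set A := (c + p) / (2 * p) with hA
  set B := (-c + p) / (2 * p) with hB
  clear_value p a b A B
  have hp2 : p ^ 2 = c ^ 2 + 4 * D := by rw [hp]; exact Real.sq_sqrt h4D.le
  have hp0 : 0 < p := by rw [hp]; exact Real.sqrt_pos.mpr h4D
  have hcabs : |c| < p := by
    rw [hp, ← Real.sqrt_sq_eq_abs]
    exact Real.sqrt_lt_sqrt (sq_nonneg c) (by linarith)
  have hcp2 : c < p := lt_of_le_of_lt (le_abs_self c) hcabs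
  have hcp1 : -p < c := by have := neg_abs_le c; linarith
  have ha0 : 0 < a := by rw [ha]; exact div_pos (by linarith) (by linarith)
  have hb0 : 0 < b := by rw [hb]; exact div_pos (by linarith) (by linarith)
  have hA0 : 0 < A := by rw [hA]; exact div_pos (by linarith) (by linarith)
  have hA1 : A < 1 := by rw [hA, div_lt_one (by linarith)]; linarith
  have hB0 : 0 < B := by rw [hB]; exact div_pos (by linarith) (by linarith)
  have hB1 : B < 1 := by rw [hB, div_lt_one (by linarith)]; linarith
  have hAB : A + B = 1 := by rw [hA, hB]; field_simp; ring
  have hAa : A * a = 1 / p := by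
    rw [hA, ha]; field_simp; linear_combination hp2
  have hBb : B * b = 1 / p := by
    rw [hB, hb]; field_simp; linear_combination hp2
  have hUeq : ∀ x : ℝ, Ufun D c x =
      if x ≤ 0 then 1/2 - A * Real.exp (a * x) else -1/2 + B * Real.exp ((-b) * x) := by
    intro x
    simp only [Ufun, ← hp, ← ha, ← hb, ← hA, ← hB]
  have hU1 : ∀ x : ℝ, x ≤ 0 → Ufun D c x = 1/2 - A * Real.exp (a * x) := by
    intro x hx; rw [hUeq x, if_pos hx]
  have hU2 : ∀ x : ℝ, ¬ x ≤ 0 → Ufun D c x = -1/2 + B * Real.exp ((-b) * x) := by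
    intro x hx; rw [hUeq x, if_neg hx]
  have hd1 : ∀ x : ℝ, HasDerivAt (fun y => 1/2 - A * Real.exp (a * y))
      (-(1/p) * Real.exp (a * x)) x := by
    intro x
    have h := (((hasDerivAt_id' (𝕜 := ℝ) (x := x)).const_mul a).exp.const_mul A).const_sub
      (1/2 : ℝ)
    refine h.congr_deriv ?_
    linear_combination (-Real.exp (a * x)) * hAa
  have hd2 : ∀ x : ℝ, HasDerivAt (fun y => -1/2 + B * Real.exp ((-b) * y))
      (-(1/p) * Real.exp ((-b) * x)) x := by
    intro x
    have h := (((hasDerivAt_id' (𝕜 := ℝ) (x := x)).const_mul (-b)).exp.const_mul B).const_add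
      (-1/2 : ℝ)
    refine h.congr_deriv ?_
    linear_combination (-Real.exp ((-b) * x)) * hBb
  set V : ℝ → ℝ := fun x => -(1/p) * Real.exp (min (a * x) ((-b) * x)) with hV
  have hVle : ∀ x : ℝ, x ≤ 0 → V x = -(1/p) * Real.exp (a * x) := by
    intro x hx
    have h1 : a * x ≤ 0 := by nlinarith [mul_nonneg ha0.le (neg_nonneg.mpr hx)]
    have h2 : 0 ≤ -b * x := by nlinarith [mul_nonneg hb0.le (neg_nonneg.mpr hx)]
    simp only [hV]
    rw [min_eq_left (by linarith)]
  have hVgt : ∀ x : ℝ, 0 ≤ x → V x = -(1/p) * Real.exp ((-b) * x) := by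
    intro x hx
    have h1 : 0 ≤ a * x := mul_nonneg ha0.le hx
    have h2 : -b * x ≤ 0 := by nlinarith [mul_nonneg hb0.le hx]
    simp only [hV]
    rw [min_eq_right (by linarith)]
  have hVcont : Continuous V := by rw [hV]; fun_prop
  have key : ∀ x : ℝ, HasDerivAt (Ufun D c) (V x) x := by
    intro x
    rcases lt_trichotomy x 0 with hx | hx | hx
    · rw [hVle x hx.le]
      refine (hd1 x).congr_of_eventuallyEq ?_
      filter_upwards [Iio_mem_nhds hx] with y hy
      exact hU1 y (le_of_lt hy)
    · subst hx
      have h1 : HasDerivWithinAt (Ufun D c) (V 0) (Set.Iic (0:ℝ)) 0 := by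
        rw [hVle 0 le_rfl]
        exact ((hd1 0).hasDerivWithinAt).congr (fun y hy => hU1 y hy) (hU1 0 le_rfl)
      have h2 : HasDerivWithinAt (Ufun D c) (V 0) (Set.Ici (0:ℝ)) 0 := by
        have hval : Ufun D c 0 = -1/2 + B * Real.exp ((-b) * 0) := by
          rw [hU1 0 le_rfl]
          simp only [mul_zero, Real.exp_zero, mul_one]
          linarith
        have heq : ∀ y ∈ Set.Ici (0:ℝ), Ufun D c y = -1/2 + B * Real.exp ((-b) * y) := by
          intro y hy
          rcases eq_or_lt_of_le (Set.mem_Ici.mp hy : (0:ℝ) ≤ y) with h | h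
          · rw [← h]; exact hval
          · exact hU2 y (not_le.mpr h)
        rw [hVgt 0 le_rfl]
        exact ((hd2 0).hasDerivWithinAt).congr heq hval
      have h3 := h1.union h2
      rw [Set.Iic_union_Ici] at h3
      exact hasDerivWithinAt_univ.mp h3
    · rw [hVgt x hx.le]
      refine (hd2 x).congr_of_eventuallyEq ?_
      filter_upwards [Ioi_mem_nhds hx] with y hy
      exact hU2 y (not_le.mpr hy)
  have hderivU : deriv (Ufun D c) = V := funext fun x => (key x).deriv
  refine ⟨?_, ?_, ?_⟩
  · exact contDiff_one_iff_deriv.mpr ⟨fun x => (key x).differentiableAt, hderivU ▸ hVcont⟩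
  · intro x hx
    rw [hderivU]
    rcases lt_or_gt_of_ne hx with hx | hx
    · have hdV : HasDerivAt V (-(1/p) * (Real.exp (a * x) * a)) x := by
        have h := (((hasDerivAt_id' (𝕜 := ℝ) (x := x)).const_mul a).exp).const_mul (-(1/p))
        have h' : HasDerivAt (fun y => -(1/p) * Real.exp (a * y))
            (-(1/p) * (Real.exp (a * x) * a)) x := by exact h.congr_deriv (by ring)
        refine h'.congr_of_eventuallyEq ?_
        filter_upwards [Iio_mem_nhds hx] with y hy
        exact hVle y (le_of_lt hy)
      rw [hdV.deriv, hVle x hx.le, hU1 x hx.le,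
        show Fstep x = 1/2 from by simp [Fstep, hx.le]]
      have hkey : D * (1/p * a) + c * (1/p) = A := by
        rw [ha, hA]; field_simp; ring
      linear_combination (-(Real.exp (a * x))) * hkey
    · have hdV : HasDerivAt V (-(1/p) * (Real.exp ((-b) * x) * (-b))) x := by
        have h := (((hasDerivAt_id' (𝕜 := ℝ) (x := x)).const_mul (-b)).exp).const_mul (-(1/p))
        have h' : HasDerivAt (fun y => -(1/p) * Real.exp ((-b) * y))
            (-(1/p) * (Real.exp ((-b) * x) * (-b))) x := by exact h.congr_deriv (by ring)
        refine h'.congr_of_eventuallyEq ?_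
        filter_upwards [Ioi_mem_nhds hx] with y hy
        exact hVgt y (le_of_lt hy)
      rw [hdV.deriv, hVgt x hx.le, hU2 x (not_le.mpr hx),
        show Fstep x = -1/2 from by simp [Fstep, not_le.mpr hx]]
      have hkey : D * (1/p * b) - c * (1/p) = B := by
        rw [hb, hB]; field_simp; ring
      linear_combination (Real.exp ((-b) * x)) * hkey
  · refine ⟨3/2, fun x => ?_⟩
    rcases le_or_gt x 0 with hx | hx
    · rw [hU1 x hx]
      have hE0 : 0 < Real.exp (a * x) := Real.exp_pos _
      have hE1 : Real.exp (a * x) ≤ 1 := Real.exp_le_one_iff.mpr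
        (by nlinarith [mul_nonneg ha0.le (neg_nonneg.mpr hx)])
      rw [abs_le]
      constructor <;> nlinarith [mul_pos hA0 hE0, mul_le_one₀ hA1.le hE0.le hE1]
    · rw [hU2 x (not_le.mpr hx)]
      have hE0 : 0 < Real.exp ((-b) * x) := Real.exp_pos _
      have hE1 : Real.exp ((-b) * x) ≤ 1 := Real.exp_le_one_iff.mpr
        (by nlinarith [mul_nonneg hb0.le hx.le])
      rw [abs_le]
      constructor <;> nlinarith [mul_pos hB0 hE0, mul_le_one₀ hB1.le hE0.le hE1]
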